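/- Let φ be an H-equivariant coderivation on a coalgebra C with coflat coaction δ of a Hopf algebra H. Then for every n ≥ 0, Δ_H(φ^{⋆n}(c)) = Σ_{k=0}^{n} (n choose k) φ^{⋆k}(c_{(1)}^{(0)}) ⊗ c_{(1)}^{(1)} φ^{⋆(n−k)}(c_{(2)}) for all c ∈ C. -/

import Mathlib

open TensorProduct LinearMap Coalgebra

/-- A coflat Hopf coaction of a Hopf algebra `H` on a coalgebra `C`. -/
structure IsCoflatCoaction (R C H : Type) [CommRing R]
    [AddCommGroup C] [Module R C] [Coalgebra R C]
    [Ring H] [HopfAlgebra R H]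
    (δ : C →ₗ[R] C ⊗[R] H) : Prop where
  coassoc : (TensorProduct.assoc R C H H).toLinearMap ∘ₗ
      (TensorProduct.map δ (LinearMap.id : H →ₗ[R] H)) ∘ₗ δ
      = (TensorProduct.map (LinearMap.id : C →ₗ[R] C) (Coalgebra.comul (R := R))) ∘ₗ δ
  counitary : (TensorProduct.rid R C).toLinearMap ∘ₗ
      (TensorProduct.map (LinearMap.id : C →ₗ[R] C) (Coalgebra.counit (R := R))) ∘ₗ δ
      = LinearMap.id
  coflat_mul : (TensorProduct.map (LinearMap.id : (C ⊗[R] C) →ₗ[R] C ⊗[R] C)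
        (LinearMap.mul' R H)) ∘ₗ
      (TensorProduct.tensorTensorTensorComm R C H C H).toLinearMap ∘ₗ
      (TensorProduct.map δ δ) ∘ₗ Coalgebra.comul
      = (TensorProduct.map (Coalgebra.comul (R := R)) (LinearMap.id : H →ₗ[R] H)) ∘ₗ δ
  coflat_counit : (LinearMap.mul' R R) ∘ₗ
      (TensorProduct.map (Coalgebra.counit (R := R)) (Coalgebra.counit (R := R))) ∘ₗ δ
      = Coalgebra.counit

section Cocharacters

variable (R C H : Type) [CommRing R] [AddCommGroup C] [Module R C] [Coalgebra R C]
  [Ring H] [HopfAlgebra R H]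

/-- The convolution product on `Hom(C,H)`: `(φ ⋆ ψ)(c) = φ(c₍₁₎) ψ(c₍₂₎)`. -/
noncomputable def conv (φ ψ : C →ₗ[R] H) : C →ₗ[R] H :=
  (LinearMap.mul' R H) ∘ₗ (TensorProduct.map φ ψ) ∘ₗ Coalgebra.comul

/-- The convolution unit `c ↦ ε(c) 1`. -/
noncomputable def convOne : C →ₗ[R] H :=
  (Algebra.linearMap R H) ∘ₗ Coalgebra.counit

variable (δ : C →ₗ[R] C ⊗[R] H)

/-- `c ↦ φ(c₍₁₎⁽⁰⁾) ⊗ c₍₁₎⁽¹⁾ ψ(c₍₂₎)` as a linear map `C → H ⊗ H`. -/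
noncomputable def coactTerm (φ ψ : C →ₗ[R] H) : C →ₗ[R] H ⊗[R] H :=
  (TensorProduct.map (LinearMap.id : H →ₗ[R] H) (LinearMap.mul' R H)) ∘ₗ
    (TensorProduct.assoc R H H H).toLinearMap ∘ₗ
    (TensorProduct.map (TensorProduct.map φ (LinearMap.id : H →ₗ[R] H)) ψ) ∘ₗ
    (TensorProduct.map δ (LinearMap.id : C →ₗ[R] C)) ∘ₗ Coalgebra.comul

/-- `c ↦ c₍₁₎⁽⁰⁾ ⊗ c₍₁₎⁽¹⁾ φ(c₍₂₎)` as a linear map `C → C ⊗ H`. -/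
noncomputable def comodCondLHS (φ : C →ₗ[R] H) : C →ₗ[R] C ⊗[R] H :=
  (TensorProduct.map (LinearMap.id : C →ₗ[R] C) (LinearMap.mul' R H)) ∘ₗ
    (TensorProduct.assoc R C H H).toLinearMap ∘ₗ
    (TensorProduct.map δ φ) ∘ₗ Coalgebra.comul

/-- `c ↦ c₍₂₎⁽⁰⁾ ⊗ φ(c₍₁₎) c₍₂₎⁽¹⁾` as a linear map `C → C ⊗ H`. -/
noncomputable def comodCondRHS (φ : C →ₗ[R] H) : C →ₗ[R] C ⊗[R] H :=
  (TensorProduct.map (LinearMap.id : C →ₗ[R] C) (LinearMap.mul' R H)) ∘ₗ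
    (TensorProduct.assoc R C H H).toLinearMap ∘ₗ
    (TensorProduct.map ((TensorProduct.comm R H C).toLinearMap)
      (LinearMap.id : H →ₗ[R] H)) ∘ₗ
    (TensorProduct.assoc R H C H).symm.toLinearMap ∘ₗ
    (TensorProduct.map φ δ) ∘ₗ Coalgebra.comul

/-- An `H`-equivariant cocharacter: convolution invertible, counitary, satisfying the
coaction condition and the comodule condition. -/
structure IsCocharacter (φ : C →ₗ[R] H) : Prop where
  invertible : ∃ ψ : C →ₗ[R] H, conv R C H φ ψ = convOne R C H ∧ conv R C H ψ φ = convOne R C H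
  counitary : (Coalgebra.counit (R := R)) ∘ₗ φ = Coalgebra.counit
  coaction : (Coalgebra.comul (R := R)) ∘ₗ φ = coactTerm R C H δ φ φ
  comodule : comodCondLHS R C H δ φ = comodCondRHS R C H δ φ

end Cocharacters

section Coderivations

variable (R C H : Type) [CommRing R] [AddCommGroup C] [Module R C] [Coalgebra R C]
  [Ring H] [HopfAlgebra R H]

/-- An `H`-equivariant coderivation: `ε ∘ φ = 0`, the infinitesimal coaction condition
`Δ(φ(c)) = e(c₍₁₎⁽⁰⁾) ⊗ c₍₁₎⁽¹⁾ φ(c₍₂₎) + φ(c₍₁₎⁽⁰⁾) ⊗ c₍₁₎⁽¹⁾ e(c₍₂₎)` (with `e(c) = ε(c)1`),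
and the comodule condition. -/
structure IsCoderivation (δ : C →ₗ[R] C ⊗[R] H) (φ : C →ₗ[R] H) : Prop where
  counit_zero : (Coalgebra.counit (R := R)) ∘ₗ φ = 0
  coaction : (Coalgebra.comul (R := R)) ∘ₗ φ
    = coactTerm R C H δ (convOne R C H) φ + coactTerm R C H δ φ (convOne R C H)
  comodule : comodCondLHS R C H δ φ = comodCondRHS R C H δ φ

/-- `n`-fold convolution power, `φ^{⋆0} = e`. -/
noncomputable def convPow (φ : C →ₗ[R] H) : ℕ → (C →ₗ[R] H)
  | 0 => convOne R C H
  | n + 1 => conv R C H φ (convPow φ n)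

end Coderivations


section AuxLemmas

variable {R C H : Type} [CommRing R] [AddCommGroup C] [Module R C] [Coalgebra R C]
  [Ring H] [HopfAlgebra R H] (δ : C →ₗ[R] C ⊗[R] H)

lemma conv_one_left (ψ : C →ₗ[R] H) : conv R C H (convOne R C H) ψ = ψ := by
  have h1 : TensorProduct.map (convOne R C H) ψ
      = (TensorProduct.map (Algebra.linearMap R H) ψ) ∘ₗ (Coalgebra.counit (R := R)).rTensor C := by
    ext x y; simp [_root_.convOne]
  rw [conv, h1, LinearMap.comp_assoc, Coalgebra.rTensor_counit_comp_comul]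
  ext c; simp

lemma conv_one_right (ψ : C →ₗ[R] H) : conv R C H ψ (convOne R C H) = ψ := by
  have h1 : TensorProduct.map ψ (convOne R C H)
      = (TensorProduct.map ψ (Algebra.linearMap R H)) ∘ₗ (Coalgebra.counit (R := R)).lTensor C := by
    ext x y; simp [_root_.convOne]
  rw [conv, h1, LinearMap.comp_assoc, Coalgebra.lTensor_counit_comp_comul]
  ext c; simp

lemma comul_conv (φ ψ : C →ₗ[R] H) :
    Coalgebra.comul (R := R) ∘ₗ conv R C H φ ψ
    = (LinearMap.mul' R (H ⊗[R] H)) ∘ₗ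
        TensorProduct.map (Coalgebra.comul ∘ₗ φ) (Coalgebra.comul ∘ₗ ψ) ∘ₗ
        Coalgebra.comul := by
  have key : Coalgebra.comul (R := R) ∘ₗ (LinearMap.mul' R H)
      = (LinearMap.mul' R (H ⊗[R] H)) ∘ₗ TensorProduct.map Coalgebra.comul Coalgebra.comul := by
    ext a b; simp
  rw [conv, ← LinearMap.comp_assoc, key, TensorProduct.map_comp]
  simp only [LinearMap.comp_assoc]

lemma coactTerm_decomp (φ ψ : C →ₗ[R] H) :
    coactTerm R C H δ φ ψ
    = (TensorProduct.map φ (LinearMap.id : H →ₗ[R] H)) ∘ₗ comodCondLHS R C H δ ψ := by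
  rw [coactTerm, comodCondLHS]
  simp only [← LinearMap.comp_assoc]
  congr 1
  ext x y
  simp only [TensorProduct.AlgebraTensorModule.curry_apply, TensorProduct.curry_apply,
    LinearMap.coe_restrictScalars, LinearMap.coe_comp, Function.comp_apply,
    TensorProduct.map_tmul, LinearMap.id_coe, id_eq]
  generalize δ x = u
  induction u using TensorProduct.induction_on with
  | zero => simp
  | tmul a b => simp
  | add a b ha hb =>
    simp only [TensorProduct.add_tmul, map_add, LinearEquiv.coe_coe] at ha hb ⊢
    rw [ha, hb]

lemma comodCondLHS_one : comodCondLHS R C H δ (convOne R C H) = δ := by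
  rw [comodCondLHS, _root_.convOne]
  have h1 : TensorProduct.map δ ((Algebra.linearMap R H) ∘ₗ (Coalgebra.counit : C →ₗ[R] R))
      = (TensorProduct.map δ (Algebra.linearMap R H)) ∘ₗ (Coalgebra.counit : C →ₗ[R] R).lTensor C := by
    ext x y; simp
  rw [h1]
  simp only [LinearMap.comp_assoc]
  rw [Coalgebra.lTensor_counit_comp_comul]
  ext c
  simp only [LinearMap.coe_comp, Function.comp_apply, TensorProduct.mk_apply,
    LinearEquiv.coe_coe, LinearMap.flip_apply, TensorProduct.map_tmul,
    Algebra.linearMap_apply, map_one]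
  generalize δ c = u
  induction u using TensorProduct.induction_on with
  | zero => simp
  | tmul a b => simp
  | add a b ha hb => simp only [TensorProduct.add_tmul, map_add, LinearEquiv.coe_coe] at ha hb ⊢; rw [ha, hb]

lemma comodCondRHS_one : comodCondRHS R C H δ (convOne R C H) = δ := by
  rw [comodCondRHS, _root_.convOne]
  have h1 : TensorProduct.map ((Algebra.linearMap R H) ∘ₗ (Coalgebra.counit : C →ₗ[R] R)) δ
      = (TensorProduct.map (Algebra.linearMap R H) δ) ∘ₗ (Coalgebra.counit : C →ₗ[R] R).rTensor C := by
    ext x y; simp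
  rw [h1]
  simp only [LinearMap.comp_assoc]
  rw [Coalgebra.rTensor_counit_comp_comul]
  ext c
  simp only [LinearMap.coe_comp, Function.comp_apply, TensorProduct.mk_apply,
    LinearEquiv.coe_coe, TensorProduct.map_tmul, Algebra.linearMap_apply, map_one]
  generalize δ c = u
  induction u using TensorProduct.induction_on with
  | zero => simp
  | tmul a b => simp
  | add a b ha hb => simp only [TensorProduct.tmul_add, map_add, LinearEquiv.coe_coe] at ha hb ⊢; rw [ha, hb]

end AuxLemmas


section FmapLemmas

variable {R C H : Type} [CommRing R] [AddCommGroup C] [Module R C] [Coalgebra R C]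
  [Ring H] [HopfAlgebra R H] (δ : C →ₗ[R] C ⊗[R] H)

/-- `c ↦ ε(c⁽⁰⁾) • c⁽¹⁾` -/
noncomputable def ftop : C ⊗[R] H →ₗ[R] H :=
  (TensorProduct.lid R H).toLinearMap ∘ₗ (Coalgebra.counit (R := R)).rTensor H

noncomputable def fmap : C →ₗ[R] H := ftop ∘ₗ δ

variable (hδ : IsCoflatCoaction R C H δ)
include hδ

lemma star2 : (LinearMap.mul' R H) ∘ₗ
    (TensorProduct.map (HopfAlgebra.antipode (R := R) ∘ₗ fmap δ) (LinearMap.id : H →ₗ[R] H)) ∘ₗ δ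
    = convOne R C H := by
  have hb : (TensorProduct.map δ (LinearMap.id : H →ₗ[R] H)) ∘ₗ δ
      = (TensorProduct.assoc R C H H).symm.toLinearMap ∘ₗ
        (TensorProduct.map (LinearMap.id : C →ₗ[R] C) (Coalgebra.comul (R := R))) ∘ₗ δ := by
    rw [← hδ.coassoc]; ext c; simp
  have ha : (LinearMap.mul' R H) ∘ₗ
      (TensorProduct.map (HopfAlgebra.antipode (R := R) ∘ₗ fmap δ) (LinearMap.id : H →ₗ[R] H))
      = ((LinearMap.mul' R H) ∘ₗ
          (TensorProduct.map (HopfAlgebra.antipode (R := R) ∘ₗ (ftop : C ⊗[R] H →ₗ[R] H))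
            (LinearMap.id : H →ₗ[R] H))) ∘ₗ
        (TensorProduct.map δ (LinearMap.id : H →ₗ[R] H)) := by
    ext x h; simp [fmap]
  rw [← LinearMap.comp_assoc, ha, LinearMap.comp_assoc, hb]
  have hc : ((LinearMap.mul' R H) ∘ₗ
        (TensorProduct.map (HopfAlgebra.antipode (R := R) ∘ₗ (ftop : C ⊗[R] H →ₗ[R] H))
          (LinearMap.id : H →ₗ[R] H))) ∘ₗ (TensorProduct.assoc R C H H).symm.toLinearMap
      = (ftop : C ⊗[R] H →ₗ[R] H) ∘ₗ
        (LinearMap.lTensor C ((LinearMap.mul' R H) ∘ₗ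
          (HopfAlgebra.antipode (R := R)).rTensor H)) := by
    ext x h k
    simp [ftop, smul_mul_assoc]
  rw [← LinearMap.comp_assoc, hc]
  have hd : (LinearMap.lTensor C ((LinearMap.mul' R H) ∘ₗ
        (HopfAlgebra.antipode (R := R)).rTensor H)) ∘ₗ
      (TensorProduct.map (LinearMap.id : C →ₗ[R] C) (Coalgebra.comul (R := R)))
      = LinearMap.lTensor C ((Algebra.linearMap R H) ∘ₗ (Coalgebra.counit : H →ₗ[R] R)) := by
    have : (TensorProduct.map (LinearMap.id : C →ₗ[R] C) (Coalgebra.comul (R := R) (A := H)))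
        = LinearMap.lTensor C (Coalgebra.comul (R := R)) := by
      ext x h; simp
    rw [this, ← LinearMap.lTensor_comp, LinearMap.comp_assoc,
      HopfAlgebra.mul_antipode_rTensor_comul]
  rw [LinearMap.comp_assoc, ← LinearMap.comp_assoc (f := δ), hd]
  have he : (ftop : C ⊗[R] H →ₗ[R] H) ∘ₗ
      (LinearMap.lTensor C ((Algebra.linearMap R H) ∘ₗ (Coalgebra.counit : H →ₗ[R] R)))
      = (Algebra.linearMap R H) ∘ₗ (LinearMap.mul' R R) ∘ₗ
        (TensorProduct.map (Coalgebra.counit : C →ₗ[R] R) (Coalgebra.counit : H →ₗ[R] R)) := by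
    ext x h
    simp [ftop, Algebra.smul_def]
  rw [← LinearMap.comp_assoc, he]
  simp only [LinearMap.comp_assoc]
  rw [show (LinearMap.mul' R R) ∘ₗ
      (TensorProduct.map (Coalgebra.counit : C →ₗ[R] R) (Coalgebra.counit : H →ₗ[R] R)) ∘ₗ δ
      = Coalgebra.counit from hδ.coflat_counit]
  rfl

lemma comodCondLHS_fmap : comodCondLHS R C H δ (fmap δ) = δ := by
  rw [comodCondLHS]
  have h1 : TensorProduct.map δ (fmap δ)
      = (TensorProduct.map (LinearMap.id : C ⊗[R] H →ₗ[R] C ⊗[R] H) (ftop : C ⊗[R] H →ₗ[R] H)) ∘ₗ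
        (TensorProduct.map δ δ) := by
    ext x y; simp [fmap]
  rw [h1]
  have h2 : (TensorProduct.map (LinearMap.id : C →ₗ[R] C) (LinearMap.mul' R H)) ∘ₗ
        (TensorProduct.assoc R C H H).toLinearMap ∘ₗ
        (TensorProduct.map (LinearMap.id : C ⊗[R] H →ₗ[R] C ⊗[R] H) (ftop : C ⊗[R] H →ₗ[R] H))
      = (((TensorProduct.rid R C).toLinearMap ∘ₗ
          (Coalgebra.counit : C →ₗ[R] R).lTensor C).rTensor H) ∘ₗ
        (TensorProduct.map (LinearMap.id : (C ⊗[R] C) →ₗ[R] C ⊗[R] C) (LinearMap.mul' R H)) ∘ₗ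
        (TensorProduct.tensorTensorTensorComm R C H C H).toLinearMap := by
    ext x h y k
    simp [ftop, TensorProduct.tensorTensorTensorComm, TensorProduct.smul_tmul',
      mul_smul_comm]
  simp only [← LinearMap.comp_assoc]
  rw [LinearMap.comp_assoc (g := (TensorProduct.assoc R C H H).toLinearMap), h2]
  simp only [LinearMap.comp_assoc]
  rw [show (TensorProduct.map (LinearMap.id : (C ⊗[R] C) →ₗ[R] C ⊗[R] C) (LinearMap.mul' R H)) ∘ₗ
      (TensorProduct.tensorTensorTensorComm R C H C H).toLinearMap ∘ₗ
      (TensorProduct.map δ δ) ∘ₗ Coalgebra.comul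
      = (TensorProduct.map (Coalgebra.comul (R := R)) (LinearMap.id : H →ₗ[R] H)) ∘ₗ δ
    from hδ.coflat_mul]
  rw [← LinearMap.comp_assoc]
  have h3 : (((TensorProduct.rid R C).toLinearMap ∘ₗ
        (Coalgebra.counit : C →ₗ[R] R).lTensor C).rTensor H) ∘ₗ
      (TensorProduct.map (Coalgebra.comul (R := R)) (LinearMap.id : H →ₗ[R] H))
      = LinearMap.id := by
    ext x h
    simp
  rw [h3, LinearMap.id_comp]

lemma fmap_eq_one : fmap δ = convOne R C H := by
  have h := congrArg (fun g => ((LinearMap.mul' R H) ∘ₗ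
    (TensorProduct.map (HopfAlgebra.antipode (R := R) ∘ₗ fmap δ) (LinearMap.id : H →ₗ[R] H))) ∘ₗ g)
    (comodCondLHS_fmap δ hδ)
  rw [comodCondLHS] at h
  -- massage LHS of h
  have hz : ((LinearMap.mul' R H) ∘ₗ
        (TensorProduct.map (HopfAlgebra.antipode (R := R) ∘ₗ fmap δ) (LinearMap.id : H →ₗ[R] H))) ∘ₗ
      (TensorProduct.map (LinearMap.id : C →ₗ[R] C) (LinearMap.mul' R H)) ∘ₗ
      (TensorProduct.assoc R C H H).toLinearMap
      = (LinearMap.mul' R H) ∘ₗ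
        (TensorProduct.map ((LinearMap.mul' R H) ∘ₗ
          (TensorProduct.map (HopfAlgebra.antipode (R := R) ∘ₗ fmap δ)
            (LinearMap.id : H →ₗ[R] H))) (LinearMap.id : H →ₗ[R] H)) := by
    ext x h k
    simp [mul_assoc]
  simp only [← LinearMap.comp_assoc] at h
  rw [LinearMap.comp_assoc (h := (LinearMap.mul' R H) ∘ₗ
        (TensorProduct.map (HopfAlgebra.antipode (R := R) ∘ₗ fmap δ) (LinearMap.id : H →ₗ[R] H))),
    hz] at h
  have hw : (TensorProduct.map ((LinearMap.mul' R H) ∘ₗ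
      (TensorProduct.map (HopfAlgebra.antipode (R := R) ∘ₗ fmap δ) (LinearMap.id : H →ₗ[R] H)))
      (LinearMap.id : H →ₗ[R] H)) ∘ₗ TensorProduct.map δ (fmap δ)
      = TensorProduct.map (((LinearMap.mul' R H) ∘ₗ
          (TensorProduct.map (HopfAlgebra.antipode (R := R) ∘ₗ fmap δ)
            (LinearMap.id : H →ₗ[R] H))) ∘ₗ δ) (fmap δ) := by
    ext x y; simp
  rw [LinearMap.comp_assoc, star2 δ hδ] at hw
  simp only [LinearMap.comp_assoc] at h
  rw [← LinearMap.comp_assoc (Coalgebra.comul) (TensorProduct.map δ (fmap δ)), hw] at h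
  rw [star2 δ hδ] at h
  have : conv R C H (convOne R C H) (fmap δ) = convOne R C H := by
    rw [conv]; exact h
  rw [← this, conv_one_left]

lemma comul_convOne : Coalgebra.comul (R := R) ∘ₗ convOne R C H
    = coactTerm R C H δ (convOne R C H) (convOne R C H) := by
  have c1 : (Coalgebra.comul (R := R)) ∘ₗ (Algebra.linearMap R H)
      = (TensorProduct.mk R H H 1) ∘ₗ (Algebra.linearMap R H) := by
    apply LinearMap.ext_ring
    simp [Algebra.TensorProduct.one_def]
  have c2 : (TensorProduct.map (convOne R C H) (LinearMap.id : H →ₗ[R] H))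
      = (TensorProduct.mk R H H 1) ∘ₗ (ftop : C ⊗[R] H →ₗ[R] H) := by
    ext x h
    simp only [TensorProduct.AlgebraTensorModule.curry_apply, TensorProduct.curry_apply,
      LinearMap.coe_restrictScalars, LinearMap.coe_comp, Function.comp_apply,
      TensorProduct.map_tmul, LinearMap.id_coe, id_eq, TensorProduct.mk_apply,
      _root_.convOne, ftop, LinearEquiv.coe_coe, LinearMap.rTensor_tmul, TensorProduct.lid_tmul]
    rw [Algebra.linearMap_apply, Algebra.algebraMap_eq_smul_one, TensorProduct.smul_tmul]
  rw [coactTerm_decomp, comodCondLHS_one, c2]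
  rw [show (convOne R C H : C →ₗ[R] H) = (Algebra.linearMap R H) ∘ₗ Coalgebra.counit from rfl,
    ← LinearMap.comp_assoc, c1]
  rw [LinearMap.comp_assoc, LinearMap.comp_assoc]
  congr 1
  exact (fmap_eq_one δ hδ).symm

end FmapLemmas


section MasterLemma

variable {R C H : Type} [CommRing R] [AddCommGroup C] [Module R C] [Coalgebra R C]
  [Ring H] [HopfAlgebra R H] (δ : C →ₗ[R] C ⊗[R] H)

/-- canonical 4-fold comultiplication -/
noncomputable def delta4 : C →ₗ[R] ((C ⊗[R] C) ⊗[R] C) ⊗[R] C :=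
  (((Coalgebra.comul (R := R) (A := C)).rTensor C).rTensor C) ∘ₗ
    ((Coalgebra.comul (R := R) (A := C)).rTensor C) ∘ₗ Coalgebra.comul

/-- the tower `c ↦ c₁ ⊗ ((c₂ ⊗ c₃) ⊗ c₄)` -/
noncomputable def tower2 : C →ₗ[R] C ⊗[R] ((C ⊗[R] C) ⊗[R] C) :=
  (((Coalgebra.comul (R := R) (A := C)).rTensor C) ∘ₗ Coalgebra.comul).lTensor C ∘ₗ
    Coalgebra.comul

noncomputable def sigma4 : C ⊗[R] ((C ⊗[R] C) ⊗[R] C) →ₗ[R] (C ⊗[R] C) ⊗[R] (C ⊗[R] C) :=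
  (TensorProduct.assoc R C C (C ⊗[R] C)).symm.toLinearMap ∘ₗ
    (TensorProduct.assoc R C C C).toLinearMap.lTensor C

lemma tower2_eq : (tower2 : C →ₗ[R] _)
    = (TensorProduct.assoc R C (C ⊗[R] C) C).toLinearMap ∘ₗ
      ((TensorProduct.assoc R C C C).toLinearMap.rTensor C) ∘ₗ (delta4 : C →ₗ[R] _) := by
  have nat4 : ((Coalgebra.comul (R := R) (A := C)).rTensor C).lTensor C ∘ₗ
      (TensorProduct.assoc R C C C).toLinearMap
      = (TensorProduct.assoc R C (C ⊗[R] C) C).toLinearMap ∘ₗ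
        ((Coalgebra.comul (R := R) (A := C)).lTensor C).rTensor C := by
    ext a b c; simp
  rw [tower2, LinearMap.lTensor_comp, LinearMap.comp_assoc, ← Coalgebra.coassoc]
  rw [← LinearMap.comp_assoc, nat4]
  simp only [LinearMap.comp_assoc]
  rw [← LinearMap.comp_assoc (Coalgebra.comul (R := R) (A := C))
    ((Coalgebra.comul (R := R) (A := C)).rTensor C)
    (((Coalgebra.comul (R := R) (A := C)).lTensor C).rTensor C)]
  rw [← LinearMap.rTensor_comp, ← Coalgebra.coassoc]
  rw [LinearMap.rTensor_comp, LinearMap.rTensor_comp]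
  simp only [LinearMap.comp_assoc, delta4]

lemma map_comul_comul : (TensorProduct.map (Coalgebra.comul (R := R) (A := C)) Coalgebra.comul)
      ∘ₗ Coalgebra.comul
    = (TensorProduct.assoc R (C ⊗[R] C) C C).toLinearMap ∘ₗ (delta4 : C →ₗ[R] _) := by
  have nat2 : (Coalgebra.comul (R := R) (A := C)).rTensor (C ⊗[R] C) ∘ₗ
      (TensorProduct.assoc R C C C).toLinearMap
      = (TensorProduct.assoc R (C ⊗[R] C) C C).toLinearMap ∘ₗ
        ((Coalgebra.comul (R := R) (A := C)).rTensor C).rTensor C := by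
    ext a b c; simp
  rw [← LinearMap.rTensor_comp_lTensor, LinearMap.comp_assoc, ← Coalgebra.coassoc]
  rw [← LinearMap.comp_assoc, nat2]
  simp only [LinearMap.comp_assoc, delta4]

lemma tower_main : (TensorProduct.map (Coalgebra.comul (R := R) (A := C)) Coalgebra.comul)
      ∘ₗ Coalgebra.comul
    = (sigma4 : C ⊗[R] ((C ⊗[R] C) ⊗[R] C) →ₗ[R] _) ∘ₗ tower2 := by
  rw [map_comul_comul, tower2_eq]
  simp only [← LinearMap.comp_assoc]
  congr 1
  ext a b c d
  simp [sigma4, delta4]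

noncomputable def Kmap (φ ψ : C →ₗ[R] H) : C ⊗[R] C →ₗ[R] H ⊗[R] H :=
  (TensorProduct.map (LinearMap.id : H →ₗ[R] H) (LinearMap.mul' R H)) ∘ₗ
    (TensorProduct.assoc R H H H).toLinearMap ∘ₗ
    (TensorProduct.map (TensorProduct.map φ (LinearMap.id : H →ₗ[R] H)) ψ) ∘ₗ
    (TensorProduct.map δ (LinearMap.id : C →ₗ[R] C))

lemma coactTerm_eq_Kmap (φ ψ : C →ₗ[R] H) :
    coactTerm R C H δ φ ψ = Kmap δ φ ψ ∘ₗ Coalgebra.comul := by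
  rw [coactTerm, Kmap]; simp only [LinearMap.comp_assoc]

noncomputable def Emap (β : C →ₗ[R] H) : C ⊗[R] C →ₗ[R] C ⊗[R] H :=
  (TensorProduct.map (LinearMap.id : C →ₗ[R] C) (LinearMap.mul' R H)) ∘ₗ
    (TensorProduct.assoc R C H H).toLinearMap ∘ₗ (TensorProduct.map δ β)

lemma comodCondLHS_eq_Emap (β : C →ₗ[R] H) :
    comodCondLHS R C H δ β = Emap δ β ∘ₗ Coalgebra.comul := by
  rw [comodCondLHS, Emap]; simp only [LinearMap.comp_assoc]

noncomputable def Fmap (β : C →ₗ[R] H) : C ⊗[R] C →ₗ[R] C ⊗[R] H :=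
  (TensorProduct.map (LinearMap.id : C →ₗ[R] C) (LinearMap.mul' R H)) ∘ₗ
    (TensorProduct.assoc R C H H).toLinearMap ∘ₗ
    (TensorProduct.map ((TensorProduct.comm R H C).toLinearMap) (LinearMap.id : H →ₗ[R] H)) ∘ₗ
    (TensorProduct.assoc R H C H).symm.toLinearMap ∘ₗ (TensorProduct.map β δ)

lemma comodCondRHS_eq_Fmap (β : C →ₗ[R] H) :
    comodCondRHS R C H δ β = Fmap δ β ∘ₗ Coalgebra.comul := by
  rw [comodCondRHS, Fmap]; simp only [LinearMap.comp_assoc]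

noncomputable def Dmap : C ⊗[R] C →ₗ[R] (C ⊗[R] C) ⊗[R] H :=
  (TensorProduct.map (LinearMap.id : (C ⊗[R] C) →ₗ[R] C ⊗[R] C) (LinearMap.mul' R H)) ∘ₗ
    (TensorProduct.tensorTensorTensorComm R C H C H).toLinearMap ∘ₗ (TensorProduct.map δ δ)

noncomputable def Vone (γ : C →ₗ[R] H) :
    (H ⊗[R] H) ⊗[R] ((C ⊗[R] H) ⊗[R] H) →ₗ[R] H ⊗[R] H :=
  (TensorProduct.map (LinearMap.mul' R H) (LinearMap.mul' R H)) ∘ₗ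
    (TensorProduct.tensorTensorTensorComm R H H H H).toLinearMap ∘ₗ
    (TensorProduct.map (LinearMap.id : H ⊗[R] H →ₗ[R] H ⊗[R] H)
      ((TensorProduct.map (LinearMap.id : H →ₗ[R] H) (LinearMap.mul' R H)) ∘ₗ
        (TensorProduct.assoc R H H H).toLinearMap ∘ₗ
        (TensorProduct.map (TensorProduct.map γ (LinearMap.id : H →ₗ[R] H))
          (LinearMap.id : H →ₗ[R] H))))

noncomputable def Vtwo (α γ : C →ₗ[R] H) :
    ((C ⊗[R] C) ⊗[R] H) ⊗[R] (H ⊗[R] H) →ₗ[R] H ⊗[R] H :=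
  (TensorProduct.map (LinearMap.id : H →ₗ[R] H) (LinearMap.mul' R H)) ∘ₗ
    (TensorProduct.assoc R H H H).toLinearMap ∘ₗ
    (TensorProduct.map
      (TensorProduct.map ((LinearMap.mul' R H) ∘ₗ TensorProduct.map α γ) (LinearMap.id : H →ₗ[R] H))
      (LinearMap.mul' R H))

lemma claimCX (α β γ ρ : C →ₗ[R] H) :
    (LinearMap.mul' R (H ⊗[R] H)) ∘ₗ (TensorProduct.map (Kmap δ α β) (Kmap δ γ ρ)) ∘ₗ
      (sigma4 : C ⊗[R] ((C ⊗[R] C) ⊗[R] C) →ₗ[R] _)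
    = Vone γ ∘ₗ (TensorProduct.map ((TensorProduct.map α (LinearMap.id : H →ₗ[R] H)) ∘ₗ δ)
        (TensorProduct.map (Fmap δ β) ρ)) := by
  ext a b c d
  simp only [TensorProduct.AlgebraTensorModule.curry_apply, TensorProduct.curry_apply,
    LinearMap.coe_restrictScalars, LinearMap.coe_comp, Function.comp_apply,
    TensorProduct.map_tmul, LinearMap.id_coe, id_eq, LinearEquiv.coe_coe,
    sigma4, Kmap, Fmap, Vone, LinearMap.lTensor_tmul, TensorProduct.assoc_tmul,
    TensorProduct.assoc_symm_tmul, TensorProduct.comm_tmul, LinearMap.mul'_apply,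
    TensorProduct.tensorTensorTensorComm_tmul]
  generalize δ a = u
  generalize δ c = w
  induction u using TensorProduct.induction_on with
  | zero => simp
  | tmul x h =>
    induction w using TensorProduct.induction_on with
    | zero => simp
    | tmul y k =>
      simp [mul_assoc]
    | add w1 w2 hw1 hw2 =>
      simp only [TensorProduct.tmul_add, TensorProduct.add_tmul, map_add, LinearEquiv.coe_coe,
        mul_add, add_mul] at hw1 hw2 ⊢
      rw [hw1, hw2]
  | add u1 u2 hu1 hu2 =>
    simp only [TensorProduct.tmul_add, TensorProduct.add_tmul, map_add, LinearEquiv.coe_coe,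
      mul_add, add_mul] at hu1 hu2 ⊢
    rw [hu1, hu2]

lemma lemmaM1 (α β γ ρ : C →ₗ[R] H) :
    (LinearMap.mul' R (H ⊗[R] H)) ∘ₗ
      TensorProduct.map (coactTerm R C H δ α β) (coactTerm R C H δ γ ρ) ∘ₗ Coalgebra.comul
    = Vone γ ∘ₗ (TensorProduct.map ((TensorProduct.map α (LinearMap.id : H →ₗ[R] H)) ∘ₗ δ)
        (TensorProduct.map (Fmap δ β) ρ)) ∘ₗ (tower2 : C →ₗ[R] _) := by
  rw [coactTerm_eq_Kmap, coactTerm_eq_Kmap, TensorProduct.map_comp]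
  simp only [LinearMap.comp_assoc]
  rw [tower_main]
  simp only [← LinearMap.comp_assoc]
  congr 1
  simp only [LinearMap.comp_assoc]
  exact claimCX δ α β γ ρ

lemma exposeMiddle (A : C →ₗ[R] H ⊗[R] H) (X : C ⊗[R] C →ₗ[R] C ⊗[R] H) (ρ : C →ₗ[R] H) :
    (TensorProduct.map A (TensorProduct.map X ρ)) ∘ₗ (tower2 : C →ₗ[R] _)
    = (TensorProduct.map A ((TensorProduct.map (X ∘ₗ Coalgebra.comul) ρ) ∘ₗ Coalgebra.comul)) ∘ₗ
        Coalgebra.comul := by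
  rw [tower2, ← LinearMap.comp_assoc, LinearMap.map_comp_lTensor]
  congr 2
  rw [← LinearMap.comp_assoc, LinearMap.map_comp_rTensor]

lemma claimCY (α β γ ρ : C →ₗ[R] H) :
    Vone γ ∘ₗ (TensorProduct.map ((TensorProduct.map α (LinearMap.id : H →ₗ[R] H)) ∘ₗ δ)
        (TensorProduct.map (Emap δ β) ρ)) ∘ₗ
      (TensorProduct.assoc R C (C ⊗[R] C) C).toLinearMap ∘ₗ
      ((TensorProduct.assoc R C C C).toLinearMap.rTensor C)
    = Vtwo α γ ∘ₗ (TensorProduct.map (Dmap δ) (TensorProduct.map β ρ)) ∘ₗ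
        (sigma4 : C ⊗[R] ((C ⊗[R] C) ⊗[R] C) →ₗ[R] _) ∘ₗ
      (TensorProduct.assoc R C (C ⊗[R] C) C).toLinearMap ∘ₗ
      ((TensorProduct.assoc R C C C).toLinearMap.rTensor C) := by
  ext a b c d
  simp only [TensorProduct.AlgebraTensorModule.curry_apply, TensorProduct.curry_apply,
    LinearMap.coe_restrictScalars, LinearMap.coe_comp, Function.comp_apply,
    TensorProduct.map_tmul, LinearMap.id_coe, id_eq, LinearEquiv.coe_coe,
    sigma4, Emap, Dmap, Vone, Vtwo, LinearMap.lTensor_tmul, LinearMap.rTensor_tmul,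
    TensorProduct.assoc_tmul, TensorProduct.assoc_symm_tmul, TensorProduct.comm_tmul,
    LinearMap.mul'_apply, TensorProduct.tensorTensorTensorComm_tmul]
  generalize δ a = u
  generalize δ b = w
  induction u using TensorProduct.induction_on with
  | zero => simp
  | tmul x h =>
    induction w using TensorProduct.induction_on with
    | zero => simp
    | tmul y k => simp [mul_assoc]
    | add w1 w2 hw1 hw2 =>
      simp only [TensorProduct.tmul_add, TensorProduct.add_tmul, map_add, LinearEquiv.coe_coe,
        mul_add, add_mul] at hw1 hw2 ⊢
      rw [hw1, hw2]
  | add u1 u2 hu1 hu2 =>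
    simp only [TensorProduct.tmul_add, TensorProduct.add_tmul, map_add, LinearEquiv.coe_coe,
      mul_add, add_mul] at hu1 hu2 ⊢
    rw [hu1, hu2]

lemma lemmaM4 (α β γ ρ : C →ₗ[R] H) :
    Vone γ ∘ₗ (TensorProduct.map ((TensorProduct.map α (LinearMap.id : H →ₗ[R] H)) ∘ₗ δ)
        (TensorProduct.map (Emap δ β) ρ)) ∘ₗ (tower2 : C →ₗ[R] _)
    = Vtwo α γ ∘ₗ (TensorProduct.map (Dmap δ ∘ₗ Coalgebra.comul)
        ((TensorProduct.map β ρ) ∘ₗ Coalgebra.comul)) ∘ₗ Coalgebra.comul := by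
  conv_rhs => rw [TensorProduct.map_comp]
  conv_rhs => simp only [LinearMap.comp_assoc]
  rw [tower_main, tower2_eq]
  simp only [← LinearMap.comp_assoc]
  congr 1
  simp only [LinearMap.comp_assoc]
  exact claimCY δ α β γ ρ

lemma claimCZ (α β γ ρ : C →ₗ[R] H) :
    (Vtwo α γ : ((C ⊗[R] C) ⊗[R] H) ⊗[R] (H ⊗[R] H) →ₗ[R] _) ∘ₗ
      (TensorProduct.map (LinearMap.id : (C ⊗[R] C) ⊗[R] H →ₗ[R] (C ⊗[R] C) ⊗[R] H)
        (TensorProduct.map β ρ))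
    = (TensorProduct.map (LinearMap.id : H →ₗ[R] H) (LinearMap.mul' R H)) ∘ₗ
      (TensorProduct.assoc R H H H).toLinearMap ∘ₗ
      (TensorProduct.map
        (TensorProduct.map ((LinearMap.mul' R H) ∘ₗ TensorProduct.map α γ)
          (LinearMap.id : H →ₗ[R] H))
        ((LinearMap.mul' R H) ∘ₗ TensorProduct.map β ρ)) := by
  ext a b h c d
  simp [Vtwo]

lemma lemmaM6 (α β γ ρ : C →ₗ[R] H) :
    Vtwo α γ ∘ₗ (TensorProduct.map
        ((TensorProduct.map (Coalgebra.comul (R := R)) (LinearMap.id : H →ₗ[R] H)) ∘ₗ δ)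
        ((TensorProduct.map β ρ) ∘ₗ Coalgebra.comul)) ∘ₗ Coalgebra.comul
    = coactTerm R C H δ (conv R C H α γ) (conv R C H β ρ) := by
  rw [coactTerm_eq_Kmap, Kmap, conv, conv, Vtwo]
  simp only [← TensorProduct.map_comp, LinearMap.comp_id, LinearMap.id_comp,
    LinearMap.comp_assoc]
  rw [← LinearMap.comp_assoc (Coalgebra.comul (R := R) (A := C))
    (TensorProduct.map ((TensorProduct.map (Coalgebra.comul (R := R)) (LinearMap.id : H →ₗ[R] H)) ∘ₗ δ)
      ((TensorProduct.map β ρ) ∘ₗ Coalgebra.comul))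
    (TensorProduct.map
      (TensorProduct.map ((LinearMap.mul' R H) ∘ₗ TensorProduct.map α γ) (LinearMap.id : H →ₗ[R] H))
      (LinearMap.mul' R H)),
    ← TensorProduct.map_comp]
  rw [← LinearMap.comp_assoc δ
    (TensorProduct.map (Coalgebra.comul (R := R)) (LinearMap.id : H →ₗ[R] H))
    (TensorProduct.map ((LinearMap.mul' R H) ∘ₗ TensorProduct.map α γ) (LinearMap.id : H →ₗ[R] H)),
    ← TensorProduct.map_comp]
  simp only [LinearMap.comp_assoc, LinearMap.id_comp, LinearMap.comp_id]

lemma master (hδ : IsCoflatCoaction R C H δ) (α β γ ρ : C →ₗ[R] H)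
    (hβ : comodCondLHS R C H δ β = comodCondRHS R C H δ β) :
    (LinearMap.mul' R (H ⊗[R] H)) ∘ₗ
      TensorProduct.map (coactTerm R C H δ α β) (coactTerm R C H δ γ ρ) ∘ₗ Coalgebra.comul
    = coactTerm R C H δ (conv R C H α γ) (conv R C H β ρ) := by
  have hβ' : Emap δ β ∘ₗ Coalgebra.comul = Fmap δ β ∘ₗ Coalgebra.comul := by
    rw [← comodCondLHS_eq_Emap, ← comodCondRHS_eq_Fmap]; exact hβ
  have hD : Dmap δ ∘ₗ Coalgebra.comul
      = (TensorProduct.map (Coalgebra.comul (R := R)) (LinearMap.id : H →ₗ[R] H)) ∘ₗ δ := by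
    rw [Dmap]; simp only [LinearMap.comp_assoc]; exact hδ.coflat_mul
  rw [lemmaM1, exposeMiddle, ← hβ', ← exposeMiddle, lemmaM4, hD, lemmaM6]

/-- the convolution on `Hom(C, H ⊗ H)` as a bilinear map -/
noncomputable def convB : (C →ₗ[R] H ⊗[R] H) →ₗ[R] (C →ₗ[R] H ⊗[R] H) →ₗ[R]
    (C →ₗ[R] H ⊗[R] H) :=
  (TensorProduct.mapBilinear (RingHom.id R) C C (H ⊗[R] H) (H ⊗[R] H)).compr₂
    ((LinearMap.lcomp R (H ⊗[R] H) (Coalgebra.comul (R := R) (A := C))) ∘ₗ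
      (LinearMap.llcomp R (C ⊗[R] C) ((H ⊗[R] H) ⊗[R] (H ⊗[R] H)) (H ⊗[R] H)
        (LinearMap.mul' R (H ⊗[R] H))))

lemma convB_apply (f g : C →ₗ[R] H ⊗[R] H) :
    convB f g = (LinearMap.mul' R (H ⊗[R] H)) ∘ₗ TensorProduct.map f g ∘ₗ Coalgebra.comul := by
  rw [convB]
  simp only [LinearMap.compr₂_apply, TensorProduct.mapBilinear_apply, LinearMap.coe_comp,
    Function.comp_apply, LinearMap.llcomp_apply', LinearMap.lcomp_apply', LinearMap.comp_assoc]

lemma pascal_sum {M : Type} [AddCommMonoid M] (n : ℕ) (g : ℕ → M) :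
    (∑ k ∈ Finset.range (n+1), n.choose k • g k)
      + (∑ k ∈ Finset.range (n+1), n.choose k • g (k+1))
    = ∑ k ∈ Finset.range (n+2), (n+1).choose k • g k := by
  rw [Finset.sum_range_succ' (fun k => (n+1).choose k • g k) (n+1)]
  simp only [Nat.choose_succ_succ, add_smul, Finset.sum_add_distrib, Nat.choose_zero_right,
    one_smul]
  rw [Finset.sum_range_succ (fun k => n.choose (k+1) • g (k+1)) n, Nat.choose_succ_self,
    zero_smul, add_zero]
  rw [Finset.sum_range_succ' (fun k => n.choose k • g k) n]
  simp only [Nat.choose_zero_right, one_smul]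
  abel

end MasterLemma



/-- for an `H`-equivariant coderivation `φ` one has, for every `n`,
`Δ(φ^{⋆n}(c)) = Σ_{k=0}^{n} (n choose k) φ^{⋆k}(c₍₁₎⁽⁰⁾) ⊗ c₍₁₎⁽¹⁾ φ^{⋆(n-k)}(c₍₂₎)`. -/
theorem coderivation_convPow_comul (R C H : Type) [CommRing R]
    [AddCommGroup C] [Module R C] [Coalgebra R C] [Ring H] [HopfAlgebra R H]
    (δ : C →ₗ[R] C ⊗[R] H) (hδ : IsCoflatCoaction R C H δ)
    (φ : C →ₗ[R] H) (hφ : IsCoderivation R C H δ φ) :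
    ∀ n : ℕ, (Coalgebra.comul (R := R)) ∘ₗ convPow R C H φ n
      = ∑ k ∈ Finset.range (n + 1),
          (n.choose k) • coactTerm R C H δ (convPow R C H φ k) (convPow R C H φ (n - k)) := by
  intro n
  induction n with
  | zero =>
    simpa [convPow] using comul_convOne δ hδ
  | succ n ih =>
    have e1 : Coalgebra.comul (R := R) ∘ₗ convPow R C H φ (n+1)
        = (LinearMap.mul' R (H ⊗[R] H)) ∘ₗ
            TensorProduct.map (Coalgebra.comul ∘ₗ φ)
              (Coalgebra.comul ∘ₗ convPow R C H φ n) ∘ₗ Coalgebra.comul :=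
      comul_conv φ (convPow R C H φ n)
    rw [e1, hφ.coaction, ih, ← convB_apply]
    have hcomodOne : comodCondLHS R C H δ (convOne R C H)
        = comodCondRHS R C H δ (convOne R C H) := by
      rw [comodCondLHS_one, comodCondRHS_one]
    simp only [map_add, LinearMap.add_apply, map_sum, map_nsmul, smul_add,
      Finset.sum_add_distrib]
    have h1 : ∀ k ∈ Finset.range (n+1),
        (n.choose k) • convB (coactTerm R C H δ (convOne R C H) φ)
          (coactTerm R C H δ (convPow R C H φ k) (convPow R C H φ (n-k)))
        = (n.choose k) • coactTerm R C H δ (convPow R C H φ k) (convPow R C H φ (n+1-k)) := by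
      intro k hk
      have hk' : n + 1 - k = (n - k) + 1 := by
        have := Finset.mem_range.mp hk; omega
      congr 1
      rw [convB_apply, master δ hδ _ _ _ _ hφ.comodule, conv_one_left, hk']
      rfl
    have h2 : ∀ k ∈ Finset.range (n+1),
        (n.choose k) • convB (coactTerm R C H δ φ (convOne R C H))
          (coactTerm R C H δ (convPow R C H φ k) (convPow R C H φ (n-k)))
        = (n.choose k) • coactTerm R C H δ (convPow R C H φ (k+1))
            (convPow R C H φ (n+1-(k+1))) := by
      intro k hk
      congr 1
      rw [convB_apply, master δ hδ _ _ _ _ hcomodOne, conv_one_left, Nat.succ_sub_succ]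
      rfl
    rw [Finset.sum_congr rfl h1, Finset.sum_congr rfl h2]
    exact pascal_sum n
      (fun k => coactTerm R C H δ (convPow R C H φ k) (convPow R C H φ (n+1-k)))
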